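/- There exists a constant C > 0 such that for all positive integers t ≤ n there exists a set S ⊆ {1, ..., n} satisfying: (i) |S| ≤ C·n/√t; (ii) S is t-periodic, i.e., for every i ∈ {1, ..., n-t}, i ∈ S if and only if i + t ∈ S; and (iii) for all i, j ∈ {1, ..., n-t} there exists h with 0 ≤ h ≤ t such that i + h ∈ S and j + h ∈ S. -/

import Mathlib

open Finset

lemma diffCover (t k : ℕ) [NeZero t] (hk : 0 < k) (hkk : t < k * k) (d : ZMod t) :
    ∃ x y : ZMod t, (x.val < k ∨ k ∣ x.val) ∧ (y.val < k ∨ k ∣ y.val) ∧ x - y = d := by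
  set m := d.val with hm
  clear_value m
  have hmt : m < t := hm ▸ d.val_lt
  have hrk : m % k < k := Nat.mod_lt _ hk
  refine ⟨((k - m % k + m : ℕ) : ZMod t), ((k - m % k : ℕ) : ZMod t), ?_, ?_, ?_⟩
  · have hsum : k - m % k + m = (m / k + 1) * k := by
      have h1 : m / k * k + m % k = m := Nat.div_add_mod' m k
      have h2 : (m / k + 1) * k = m / k * k + k := by ring
      omega
    rw [hsum, ZMod.val_natCast]
    have hqk : m / k * k ≤ m := Nat.div_mul_le_self m k
    have h2 : (m / k + 1) * k = m / k * k + k := by ring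
    by_cases hlt : (m / k + 1) * k < t
    · right
      rw [Nat.mod_eq_of_lt hlt]
      exact dvd_mul_left k (m / k + 1)
    · left
      push_neg at hlt
      rw [Nat.mod_eq_sub_mod hlt]
      calc ((m / k + 1) * k - t) % t ≤ (m / k + 1) * k - t := Nat.mod_le _ _
        _ < k := by omega
  · rw [ZMod.val_natCast]
    have h1 : (k - m % k) % t ≤ k := le_trans (Nat.mod_le _ _) (Nat.sub_le _ _)
    rcases lt_or_eq_of_le h1 with h | h
    · exact Or.inl h
    · exact Or.inr (by rw [h])
  · have : ((k - m % k + m : ℕ) : ZMod t) = ((k - m % k : ℕ) : ZMod t) + (m : ℕ) := by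
      push_cast; ring
    rw [this, hm]
    simp [ZMod.natCast_val, ZMod.cast_id]

lemma Acard (t k : ℕ) [NeZero t] (hk : 0 < k) (hkk : t < k * k) :
    ((univ : Finset (ZMod t)).filter (fun c => c.val < k ∨ k ∣ c.val)).card ≤ 2 * k := by
  classical
  have hsub : (univ : Finset (ZMod t)).filter (fun c => c.val < k ∨ k ∣ c.val)
      = (univ.filter fun c : ZMod t => c.val < k) ∪ (univ.filter fun c : ZMod t => k ∣ c.val) :=
    Finset.filter_or _ _ _
  have b1 : (univ.filter fun c : ZMod t => c.val < k).card ≤ k := by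
    have := Finset.card_le_card_of_injOn (fun c : ZMod t => c.val)
      (s := univ.filter fun c : ZMod t => c.val < k) (t := Finset.range k)
      (fun c hc => Finset.mem_range.mpr (by simp only [Finset.mem_coe, Finset.mem_filter] at hc; exact hc.2))
      (fun c₁ _ c₂ _ h => ZMod.val_injective t h)
    simpa using this
  have b2 : (univ.filter fun c : ZMod t => k ∣ c.val).card ≤ k := by
    have := Finset.card_le_card_of_injOn (fun c : ZMod t => c.val / k)
      (s := univ.filter fun c : ZMod t => k ∣ c.val) (t := Finset.range k)
      (fun c hc => Finset.mem_range.mpr (Nat.div_lt_of_lt_mul (lt_trans c.val_lt hkk)))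
      (fun c₁ h₁ c₂ h₂ h => by
        apply ZMod.val_injective t
        have e1 : c₁.val = k * (c₁.val / k) := (Nat.mul_div_cancel' (Finset.mem_filter.mp h₁).2).symm
        have e2 : c₂.val = k * (c₂.val / k) := (Nat.mul_div_cancel' (Finset.mem_filter.mp h₂).2).symm
        rw [e1, e2]; exact congrArg _ h)
    simpa using this
  calc _ ≤ _ := hsub ▸ Finset.card_union_le _ _
    _ ≤ 2 * k := by omega

/-- There is a constant `C > 0` such that for all positive integers `t ≤ n` there
is a `t`-cover `S ⊆ {1,…,n}` of size at most `C·n/√t`: `S` is `t`-periodic and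
any two positions `i, j ∈ {1,…,n-t}` can be simultaneously shifted into `S` by
some `h ≤ t`. -/
theorem exists_t_cover :
    ∃ C : ℝ, 0 < C ∧ ∀ n t : ℕ, 0 < t → t ≤ n →
      ∃ S : Finset ℕ, S ⊆ Finset.Icc 1 n ∧
        (S.card : ℝ) ≤ C * n / Real.sqrt t ∧
        (∀ i, 1 ≤ i → i ≤ n - t → (i ∈ S ↔ i + t ∈ S)) ∧
        (∀ i j, 1 ≤ i → i ≤ n - t → 1 ≤ j → j ≤ n - t →
          ∃ h ≤ t, i + h ∈ S ∧ j + h ∈ S) := by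
  classical
  refine ⟨100, by norm_num, fun n t ht htn => ?_⟩
  haveI : NeZero t := ⟨ht.ne'⟩
  set k := Nat.sqrt t + 1 with hkdef
  have hk : 0 < k := Nat.succ_pos _
  have hkk : t < k * k := Nat.lt_succ_sqrt t
  set S := (Finset.Icc 1 n).filter
    (fun i => ((i - 1 : ℕ) : ZMod t).val < k ∨ k ∣ ((i - 1 : ℕ) : ZMod t).val) with hS
  refine ⟨S, Finset.filter_subset _ _, ?_, ?_, ?_⟩
  · -- cardinality
    have hcard : S.card ≤ 2 * k * ((n-1)/t + 1) := by
      have hinj := Finset.card_le_card_of_injOn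
        (fun i => (((i-1 : ℕ) : ZMod t), (i-1)/t))
        (s := S)
        (t := ((univ.filter (fun c : ZMod t => c.val < k ∨ k ∣ c.val)) ×ˢ
          Finset.range ((n-1)/t + 1)))
        (fun i hi => by
          simp only [hS, Finset.mem_coe, Finset.mem_filter, Finset.mem_Icc] at hi
          refine Finset.mem_product.mpr ⟨Finset.mem_filter.mpr ⟨Finset.mem_univ _, hi.2⟩, ?_⟩
          exact Finset.mem_range.mpr (Nat.lt_succ_of_le (Nat.div_le_div_right (by omega))))
        (fun i₁ h₁ i₂ h₂ h => by
          simp only [hS, Finset.coe_filter, Finset.mem_Icc, Set.mem_setOf_eq] at h₁ h₂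
          have hfst : ((i₁-1 : ℕ) : ZMod t) = ((i₂-1 : ℕ) : ZMod t) := congrArg Prod.fst h
          have hsnd : (i₁-1)/t = (i₂-1)/t := congrArg Prod.snd h
          have hmod := congrArg ZMod.val hfst
          rw [ZMod.val_natCast, ZMod.val_natCast] at hmod
          have e1 := Nat.div_add_mod (i₁-1) t
          have e2 := Nat.div_add_mod (i₂-1) t
          rw [← hsnd] at e2
          omega)
      rw [Finset.card_product, Finset.card_range] at hinj
      exact le_trans hinj (Nat.mul_le_mul_right _ (Acard t k hk hkk))
    have ht0R : (0:ℝ) < t := by exact_mod_cast ht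
    have hsq0 : 0 < Real.sqrt t := Real.sqrt_pos.mpr ht0R
    have hsq1 : (1:ℝ) ≤ Real.sqrt t := by
      rw [show (1:ℝ) = Real.sqrt 1 by simp]
      exact Real.sqrt_le_sqrt (by exact_mod_cast ht)
    have hts : Real.sqrt t * Real.sqrt t = t := Real.mul_self_sqrt ht0R.le
    have hkR : (k:ℝ) ≤ 2 * Real.sqrt t := by
      have h1 : (Nat.sqrt t : ℝ) ≤ Real.sqrt t := by
        rw [show ((Nat.sqrt t : ℕ) : ℝ) = Real.sqrt ((Nat.sqrt t : ℝ)^2) from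
          (Real.sqrt_sq (by positivity)).symm]
        apply Real.sqrt_le_sqrt
        exact_mod_cast Nat.sqrt_le' t
      rw [hkdef]; push_cast; linarith
    have hmR : (((n-1)/t + 1 : ℕ) : ℝ) ≤ 2 * n / (t:ℝ) := by
      have hnat : ((n-1)/t + 1) * t ≤ 2 * n := by
        have h1 := Nat.div_mul_le_self (n-1) t
        have h2 : ((n-1)/t + 1) * t = (n-1)/t * t + t := by ring
        omega
      rw [le_div_iff₀ ht0R]
      exact_mod_cast hnat
    have h0 : (S.card : ℝ) ≤ ((2*k : ℕ) : ℝ) * (((n-1)/t + 1 : ℕ) : ℝ) := by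
      exact_mod_cast hcard
    calc (S.card:ℝ) ≤ ((2*k : ℕ) : ℝ) * (((n-1)/t+1 : ℕ) : ℝ) := h0
      _ ≤ (2*(2*Real.sqrt t)) * (2*n/(t:ℝ)) := by
          have hkR' := hkR
          have hmR' := hmR
          have hm0 : (0:ℝ) ≤ (((n-1)/t + 1 : ℕ) : ℝ) := by positivity
          push_cast at hkR' hmR' hm0 ⊢
          apply mul_le_mul (by linarith) hmR' hm0 (by positivity)
      _ = 8 * n / Real.sqrt t := by
          field_simp
          nlinarith [hts]
      _ ≤ 100 * n / Real.sqrt t := by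
          gcongr <;> norm_num
  · -- periodicity
    intro i h1i h2i
    have e : ((i + t - 1 : ℕ) : ZMod t) = ((i - 1 : ℕ) : ZMod t) := by
      rw [show i + t - 1 = (i - 1) + t by omega]; push_cast; simp
    simp only [hS, Finset.mem_filter, Finset.mem_Icc, e]
    constructor
    · rintro ⟨⟨_, _⟩, hq⟩; exact ⟨⟨by omega, by omega⟩, hq⟩
    · rintro ⟨⟨_, _⟩, hq⟩; exact ⟨⟨by omega, by omega⟩, hq⟩
  · -- cover
    intro i j h1i h2i h1j h2j
    set a := ((i - 1 : ℕ) : ZMod t) with ha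
    set b := ((j - 1 : ℕ) : ZMod t) with hb
    obtain ⟨x, y, hQx, hQy, hxy⟩ := diffCover t k hk hkk (a - b)
    have hcast : (((x - a).val : ℕ) : ZMod t) = x - a := by
      simp [ZMod.natCast_val, ZMod.cast_id]
    have hhlt : (x - a).val < t := ZMod.val_lt _
    refine ⟨(x - a).val, le_of_lt hhlt, ?_, ?_⟩
    · apply Finset.mem_filter.mpr
      refine ⟨Finset.mem_Icc.mpr ⟨by omega, by omega⟩, ?_⟩
      have e : ((i + (x - a).val - 1 : ℕ) : ZMod t) = x := by
        rw [show i + (x - a).val - 1 = (i - 1) + (x - a).val by omega, Nat.cast_add, hcast,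
          ← ha]
        ring
      rw [e]
      exact hQx
    · apply Finset.mem_filter.mpr
      refine ⟨Finset.mem_Icc.mpr ⟨by omega, by omega⟩, ?_⟩
      have e : ((j + (x - a).val - 1 : ℕ) : ZMod t) = y := by
        rw [show j + (x - a).val - 1 = (j - 1) + (x - a).val by omega, Nat.cast_add, hcast,
          ← hb]
        linear_combination hxy
      rw [e]
      exact hQy
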